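/- Let K = F_{2^r} and let L be an F_2-linear subspace of N×N matrices over F_2. If A is a nonzero matrix in the K-span of L (inside K^{N×N}) with rank over K at most k, then there exists a nonzero matrix B ∈ L with rank over F_2 at most r·k. -/

import Mathlib

open Matrix in

/-- Rank descent: K = F_{2^r}, L an F₂-linear subspace of N×N
matrices over F₂. Any nonzero matrix in the K-span of (the image of) L inside
K^{N×N} of K-rank ≤ k yields a nonzero B ∈ L with F₂-rank ≤ r·k. -/
theorem stmt7 (N r k : ℕ) (hr : 0 < r)
    (L : Submodule (ZMod 2) (Matrix (Fin N) (Fin N) (ZMod 2)))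
    (A : Matrix (Fin N) (Fin N) (GaloisField 2 r))
    (hA : A ∈ Submodule.span (GaloisField 2 r)
      ((fun M : Matrix (Fin N) (Fin N) (ZMod 2) =>
          M.map (algebraMap (ZMod 2) (GaloisField 2 r))) '' (L : Set _)))
    (hA0 : A ≠ 0) (hrank : A.rank ≤ k) :
    ∃ B ∈ L, B ≠ 0 ∧ Matrix.rank B ≤ r * k := by
  obtain ⟨n, c, g, hsum⟩ := Submodule.mem_span_set'.mp hA
  choose M hML hMeq using fun i => (g i).2
  obtain ⟨a, b, hab⟩ : ∃ a b, A a b ≠ 0 := by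
    by_contra h
    push_neg at h
    exact hA0 (by ext a b; simpa using h a b)
  obtain ⟨φ, hφ⟩ : ∃ φ : Module.Dual (ZMod 2) (GaloisField 2 r), φ (A a b) ≠ 0 := by
    by_contra h
    push_neg at h
    exact hab ((Module.forall_dual_apply_eq_zero_iff (ZMod 2) _).mp h)
  set B : Matrix (Fin N) (Fin N) (ZMod 2) := fun i j => φ (A i j) with hBdef
  have hAentry : ∀ x y, A x y = ∑ i, c i * algebraMap (ZMod 2) (GaloisField 2 r) ((M i) x y) := by
    intro x y
    rw [← hsum]
    simp only [Finset.sum_apply, Matrix.sum_apply, Matrix.smul_apply]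
    refine Finset.sum_congr rfl fun i _ => ?_
    rw [← hMeq i]
    rfl
  have hBsum : B = ∑ i, φ (c i) • M i := by
    ext x y
    simp only [hBdef, hAentry x y, map_sum, Finset.sum_apply, Matrix.sum_apply,
      Matrix.smul_apply]
    refine Finset.sum_congr rfl fun i _ => ?_
    have : c i * algebraMap (ZMod 2) (GaloisField 2 r) ((M i) x y) = ((M i) x y) • c i := by
      rw [Algebra.smul_def]; ring
    rw [this, _root_.map_smul]
    simp [smul_eq_mul, mul_comm]
  refine ⟨B, ?_, ?_, ?_⟩
  · rw [hBsum]
    exact Submodule.sum_mem _ fun i _ => Submodule.smul_mem _ _ (hML i)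
  · intro h
    apply hφ
    have := congrFun (congrFun h a) b
    simpa [hBdef] using this
  · -- rank bound
    classical
    set V : Submodule (GaloisField 2 r) (Fin N → GaloisField 2 r) := Submodule.span (GaloisField 2 r) (Set.range Aᵀ) with hV
    have hVrank : Module.finrank (GaloisField 2 r) V = A.rank := (Matrix.rank_eq_finrank_span_cols A).symm
    set Φ : (Fin N → GaloisField 2 r) →ₗ[ZMod 2] (Fin N → ZMod 2) :=
      LinearMap.pi (fun i => φ.comp (LinearMap.proj i)) with hΦ
    have hcols : Set.range Bᵀ = Φ '' Set.range Aᵀ := by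
      refine Eq.trans ?_ (Set.range_comp (⇑Φ) (Aᵀ : Fin N → Fin N → GaloisField 2 r))
      refine congrArg Set.range (funext fun j => funext fun i => ?_)
      rfl
    have h1 : Matrix.rank B =
        Module.finrank (ZMod 2) (Submodule.map Φ (Submodule.span (ZMod 2) (Set.range Aᵀ))) := by
      rw [Matrix.rank_eq_finrank_span_cols, Matrix.col, hcols, Submodule.span_image]
    have hle : Submodule.map Φ (Submodule.span (ZMod 2) (Set.range Aᵀ)) ≤
        Submodule.map Φ (V.restrictScalars (ZMod 2)) := by
      apply Submodule.map_mono
      rw [Submodule.span_le]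
      intro x hx
      exact Submodule.subset_span hx
    have hfinK : FiniteDimensional (GaloisField 2 r) V := inferInstance
    have hfin2 : FiniteDimensional (ZMod 2) (V.restrictScalars (ZMod 2)) := by
      have : FiniteDimensional (ZMod 2) (Fin N → GaloisField 2 r) := inferInstance
      infer_instance
    have h2 : Module.finrank (ZMod 2) (V.restrictScalars (ZMod 2)) =
        r * Module.finrank (GaloisField 2 r) V := by
      have := Module.finrank_mul_finrank (ZMod 2) (GaloisField 2 r) V
      rw [GaloisField.finrank 2 hr.ne'] at this
      exact this.symm
    calc Matrix.rank B
        = Module.finrank (ZMod 2)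
            (Submodule.map Φ (Submodule.span (ZMod 2) (Set.range Aᵀ))) := h1
      _ ≤ Module.finrank (ZMod 2) (Submodule.map Φ (V.restrictScalars (ZMod 2))) :=
          Submodule.finrank_mono hle
      _ ≤ Module.finrank (ZMod 2) (V.restrictScalars (ZMod 2)) :=
          Submodule.finrank_map_le Φ _
      _ = r * Module.finrank (GaloisField 2 r) V := h2
      _ ≤ r * k := Nat.mul_le_mul_left r (by rw [hVrank]; exact hrank)
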